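/- Let K be an algebraically closed field, let V be an n-dimensional K-vector space with n ≥ 1, and let T₁, …, T_{r+1} ∈ GL(V) satisfy T₁ ⋯ T_{r+1} = 1. Suppose the subgroup of GL(V) generated by T₁, …, T_{r+1} acts irreducibly on V. Then ∑_{i=1}^{r+1} dim C_{GL(V)}(T_i) ≤ (r−1)·n² + 2, where dim C_{GL(V)}(T_i) denotes the K-dimension of the centralizer of T_i, namely dim_K {X ∈ End_K(V) : X∘T_i = T_i∘X}. -/

import Mathlib

/-- The centralizer of a linear endomorphism `T` of `V` inside `End_K(V)`, as a `K`-submodule: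
the space of all `K`-linear endomorphisms `X` of `V` with `X ∘ T = T ∘ X`. -/
def centralizerSubmodule (K : Type*) {V : Type*} [Field K] [AddCommGroup V] [Module K V]
    (T : V →ₗ[K] V) : Submodule K (V →ₗ[K] V) where
  carrier := {X | X ∘ₗ T = T ∘ₗ X}
  add_mem' := by
    intro a b ha hb
    simp only [Set.mem_setOf_eq] at *
    rw [LinearMap.add_comp, LinearMap.comp_add, ha, hb]
  zero_mem' := by
    simp only [Set.mem_setOf_eq, LinearMap.zero_comp, LinearMap.comp_zero]
  smul_mem' := by
    intro c a ha
    simp only [Set.mem_setOf_eq] at *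
    rw [LinearMap.smul_comp, LinearMap.comp_smul, ha]

open Module LinearMap

section Aux

variable {K : Type*} [Field K] {V : Type*} [AddCommGroup V] [Module K V] [FiniteDimensional K V]

/-- The trace pairing `Z ↦ (X ↦ trace (Z ∘ X))` as a linear map into the dual. -/
noncomputable def tracePairing (K : Type*) (V : Type*) [Field K] [AddCommGroup V] [Module K V]
    [FiniteDimensional K V] : (V →ₗ[K] V) →ₗ[K] Module.Dual K (V →ₗ[K] V) where
  toFun Z := (LinearMap.trace K V) ∘ₗ (LinearMap.llcomp K V V V Z)
  map_add' := by intros; ext X; simp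
  map_smul' := by intros; ext X; simp

lemma tracePairing_apply (Z X : V →ₗ[K] V) :
    tracePairing K V Z X = LinearMap.trace K V (Z ∘ₗ X) := rfl

lemma tracePairing_injective : Function.Injective (tracePairing K V) := by
  classical
  rw [← LinearMap.ker_eq_bot, Submodule.eq_bot_iff]
  intro Z hZ
  rw [LinearMap.mem_ker] at hZ
  have h : ∀ X : V →ₗ[K] V, LinearMap.trace K V (Z ∘ₗ X) = 0 := by
    intro X
    have := congrFun (congrArg DFunLike.coe hZ) X
    simpa [tracePairing_apply] using this
  let b := Module.finBasis K V
  have hinj := (LinearMap.toMatrix b b).injective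
  apply hinj
  rw [map_zero]
  ext i j
  have h1 := h (Matrix.toLin b b (Matrix.single j i 1))
  rw [LinearMap.trace_eq_matrix_trace K b, LinearMap.toMatrix_comp b b b,
    LinearMap.toMatrix_toLin] at h1
  rw [Matrix.zero_apply, ← h1, Matrix.trace, Finset.sum_eq_single i]
  · simp [Matrix.diag]
  · intro a _ ha
    simp [Matrix.diag, Matrix.mul_single_apply_of_ne (hbj := ha)]
  · simp

lemma tracePairing_surjective : Function.Surjective (tracePairing K V) := by
  rw [← LinearMap.range_eq_top,
    ← LinearMap.ker_eq_bot_iff_range_eq_top_of_finrank_eq_finrank Subspace.dual_finrank_eq.symm,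
    LinearMap.ker_eq_bot]
  exact tracePairing_injective

/-- Schur's lemma in the form we need. -/
lemma schur_aux [IsAlgClosed K] [Nontrivial V] {r : ℕ} (T : Fin (r + 1) → (V ≃ₗ[K] V))
    (hirr : ∀ W : Submodule K V, (∀ i : Fin (r + 1), ∀ v ∈ W, T i v ∈ W) → W = ⊥ ∨ W = ⊤)
    (Z : V →ₗ[K] V) (hZ : ∀ i, ∀ v, Z (T i v) = T i (Z v)) :
    ∃ a : K, Z = a • (1 : V →ₗ[K] V) := by
  obtain ⟨μ, hμ⟩ := Module.End.exists_eigenvalue (Z : Module.End K V)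
  have hne : Module.End.eigenspace Z μ ≠ ⊥ := hμ
  have hinv : ∀ i : Fin (r + 1), ∀ v ∈ Module.End.eigenspace Z μ,
      T i v ∈ Module.End.eigenspace Z μ := by
    intro i v hv
    rw [Module.End.mem_eigenspace_iff] at hv ⊢
    rw [hZ i v, hv, map_smul]
  rcases hirr _ hinv with h | h
  · exact absurd h hne
  · refine ⟨μ, ?_⟩
    ext v
    have hv : v ∈ Module.End.eigenspace Z μ := h ▸ Submodule.mem_top
    rw [Module.End.mem_eigenspace_iff] at hv
    simpa using hv

lemma finrank_span_singleton_le (x : V) : finrank K (Submodule.span K ({x} : Set V)) ≤ 1 := by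
  by_cases hx : x = 0
  · rw [hx, Submodule.span_zero_singleton]
    simp
  · rw [finrank_span_singleton hx]

end Aux

set_option maxHeartbeats 1000000 in
/-- **Dimension count.** If `K` is an algebraically closed field, `V` an `n`-dimensional
`K`-vector space with `n ≥ 1`, and `T₁, …, T_{r+1}` are invertible linear maps of `V` whose
product is the identity and which generate an irreducible subgroup of `GL(V)`, then
`∑ᵢ dim C_{GL(V)}(Tᵢ) ≤ (r−1)·n² + 2`, where `dim C_{GL(V)}(Tᵢ)` is the `K`-dimension of the
space of endomorphisms of `V` commuting with `Tᵢ`. -/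
theorem dimension_count (K : Type*) [Field K] [IsAlgClosed K]
    (V : Type*) [AddCommGroup V] [Module K V] [FiniteDimensional K V]
    (n : ℕ) (hn : Module.finrank K V = n) (hn1 : 1 ≤ n)
    (r : ℕ) (T : Fin (r + 1) → (V ≃ₗ[K] V))
    (hprod : (List.ofFn T).prod = 1)
    (hirr : ∀ W : Submodule K V, (∀ i : Fin (r + 1), ∀ v ∈ W, T i v ∈ W) → W = ⊥ ∨ W = ⊤) :
    (∑ i : Fin (r + 1),
        (Module.finrank K (centralizerSubmodule K (T i).toLinearMap) : ℤ))
      ≤ ((r : ℤ) - 1) * (n : ℤ) ^ 2 + 2 := by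
  classical
  have hVnt : Nontrivial V := by
    rw [← Module.finrank_pos_iff (R := K)]; omega
  have hE : finrank K (V →ₗ[K] V) = n ^ 2 := by
    rw [Module.finrank_linearMap, hn, sq]
  -- the operators `u i = conj by (T i) − id` on `End K V`
  set u : Fin (r + 1) → ((V →ₗ[K] V) →ₗ[K] (V →ₗ[K] V)) :=
    fun i => ((T i).conj : (V →ₗ[K] V) ≃ₗ[K] (V →ₗ[K] V)).toLinearMap - LinearMap.id with hu
  have hu_apply : ∀ i X, u i X = (T i).conj X - X := fun i X => rfl
  -- suffix products
  set q : ℕ → (V ≃ₗ[K] V) := fun j => ((List.ofFn T).drop j).prod with hq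
  have hq0 : q 0 = 1 := by simpa [hq] using hprod
  have hqk : q (r + 1) = 1 := by
    simp only [hq]
    rw [List.drop_eq_nil_of_le (by simp), List.prod_nil]
  have hconj_mul : ∀ (a b : V ≃ₗ[K] V) (X : V →ₗ[K] V),
      (a * b).conj X = a.conj (b.conj X) := by
    intro a b X
    ext v
    simp only [LinearEquiv.conj_apply_apply]
    rfl
  have hqs : ∀ i : Fin (r + 1), q (i : ℕ) = T i * q ((i : ℕ) + 1) := by
    intro i
    have hlen : (i : ℕ) < (List.ofFn T).length := by simp; omega
    simp only [hq]
    rw [List.drop_eq_getElem_cons hlen, List.prod_cons, List.getElem_ofFn]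
  -- telescoping function
  set g : (V →ₗ[K] V) → ℕ → (V →ₗ[K] V) := fun X j => (q j).conj X with hgdef
  have hg0 : ∀ X, g X 0 = X := by
    intro X
    simp only [hgdef, hq0]
    ext v
    simp only [LinearEquiv.conj_apply_apply]
    rfl
  have hgk : ∀ X, g X (r + 1) = X := by
    intro X
    simp only [hgdef, hqk]
    ext v
    simp only [LinearEquiv.conj_apply_apply]
    rfl
  have hstep : ∀ (X) (i : Fin (r + 1)),
      u i ((q ((i : ℕ) + 1)).conj X) = g X (i : ℕ) - g X ((i : ℕ) + 1) := by
    intro X i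
    rw [hu_apply]
    congr 1
    simp only [hgdef]
    rw [hqs i, hconj_mul]
  -- the maps Ψ and S
  set s : Fin (r + 1) → ((V →ₗ[K] V) →ₗ[K] (V →ₗ[K] V)) :=
    fun i => ((q ((i : ℕ) + 1)).conj : (V →ₗ[K] V) ≃ₗ[K] (V →ₗ[K] V)).toLinearMap with hs
  set Ψ : (V →ₗ[K] V) →ₗ[K] (Π i : Fin (r + 1), ↥(LinearMap.range (u i))) :=
    LinearMap.pi (fun i => ((u i) ∘ₗ (s i)).codRestrict (LinearMap.range (u i))
      (fun X => ⟨s i X, rfl⟩)) with hΨ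
  set S : (Π i : Fin (r + 1), ↥(LinearMap.range (u i))) →ₗ[K] (V →ₗ[K] V) :=
    ∑ i : Fin (r + 1), (LinearMap.range (u i)).subtype ∘ₗ (LinearMap.proj i) with hSdef
  have hS_apply : ∀ f, S f = ∑ i : Fin (r + 1), (f i : V →ₗ[K] V) := by
    intro f; simp [hSdef, LinearMap.sum_apply]
  have hΨ_apply : ∀ X i, ((Ψ X) i : V →ₗ[K] V) = u i ((q ((i : ℕ) + 1)).conj X) := by
    intro X i; rfl
  -- telescoping: S ∘ Ψ = 0
  have htel : ∀ X, S (Ψ X) = 0 := by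
    intro X
    rw [hS_apply]
    rw [Finset.sum_congr rfl (fun (i : Fin (r + 1)) _ => (hΨ_apply X i).trans (hstep X i))]
    rw [Fin.sum_univ_eq_sum_range (fun j => g X j - g X (j + 1))]
    rw [Finset.sum_range_sub' (fun j => g X j)]
    rw [hg0, hgk, sub_self]
  have hrangeΨ : LinearMap.range Ψ ≤ LinearMap.ker S := by
    rintro _ ⟨X, rfl⟩
    exact htel X
  -- kernel of Ψ consists of scalars
  have hkerΨ : LinearMap.ker Ψ ≤ Submodule.span K ({(1 : V →ₗ[K] V)} : Set (V →ₗ[K] V)) := by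
    intro X hX
    rw [LinearMap.mem_ker] at hX
    have hzero : ∀ i : Fin (r + 1), g X (i : ℕ) = g X ((i : ℕ) + 1) := by
      intro i
      have h2 := congrArg
        (fun f : (Π j : Fin (r + 1), ↥(LinearMap.range (u j))) => ((f i : _) : V →ₗ[K] V)) hX
      simp only [Pi.zero_apply, ZeroMemClass.coe_zero] at h2
      rw [hΨ_apply X i, hstep X i] at h2
      exact sub_eq_zero.mp h2
    have hconst : ∀ m, m ≤ r + 1 → g X (r + 1 - m) = X := by
      intro m
      induction m with
      | zero => intro _; simpa using hgk X
      | succ m ih =>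
        intro hm
        have hlt : r + 1 - (m + 1) < r + 1 := by omega
        have heq := hzero ⟨r + 1 - (m + 1), hlt⟩
        simp only [] at heq
        have : r + 1 - (m + 1) + 1 = r + 1 - m := by omega
        rw [this] at heq
        rw [heq]
        exact ih (by omega)
    have hgX : ∀ j, j ≤ r + 1 → g X j = X := by
      intro j hj
      have := hconst (r + 1 - j) (by omega)
      rwa [show r + 1 - (r + 1 - j) = j by omega] at this
    have hcomm : ∀ i : Fin (r + 1), (T i).conj X = X := by
      intro i
      have h1 : g X ((i : ℕ) + 1) = X := hgX _ (by omega)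
      have h2 : g X (i : ℕ) = X := hgX _ (by omega)
      have h3 : (T i).conj (g X ((i : ℕ) + 1)) = g X (i : ℕ) := by
        simp only [hgdef]
        rw [hqs i, hconj_mul]
      rw [h1, h2] at h3
      exact h3
    have hZcomm : ∀ i : Fin (r + 1), ∀ v, X (T i v) = T i (X v) := by
      intro i v
      have := congrFun (congrArg DFunLike.coe (hcomm i)) (T i v)
      rw [LinearEquiv.conj_apply_apply] at this
      rw [← this, LinearEquiv.symm_apply_apply]
    obtain ⟨a, ha⟩ := schur_aux T hirr X hZcomm
    rw [ha]
    exact Submodule.smul_mem _ _ (Submodule.mem_span_singleton_self _)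
  -- identify the centralizer with ker (u i)
  have hkerU : ∀ i : Fin (r + 1),
      centralizerSubmodule K (T i).toLinearMap = LinearMap.ker (u i) := by
    intro i
    ext X
    have hmem : X ∈ centralizerSubmodule K (T i).toLinearMap ↔
        X ∘ₗ (T i).toLinearMap = (T i).toLinearMap ∘ₗ X := Iff.rfl
    rw [hmem, LinearMap.mem_ker, hu_apply, sub_eq_zero]
    constructor
    · intro h
      ext v
      rw [LinearEquiv.conj_apply_apply]
      have := congrFun (congrArg DFunLike.coe h) ((T i).symm v)
      simp only [LinearMap.comp_apply, LinearEquiv.coe_coe] at this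
      rw [LinearEquiv.apply_symm_apply] at this
      rw [← this]
    · intro h
      ext v
      have := congrFun (congrArg DFunLike.coe h) (T i v)
      rw [LinearEquiv.conj_apply_apply, LinearEquiv.symm_apply_apply] at this
      simp only [LinearMap.comp_apply, LinearEquiv.coe_coe]
      rw [this]
  -- range of S contains every range (u i)
  have hrangeS : ∀ i : Fin (r + 1), LinearMap.range (u i) ≤ LinearMap.range S := by
    intro i Y hY
    refine ⟨Pi.single i ⟨Y, hY⟩, ?_⟩
    rw [hS_apply]
    rw [Finset.sum_eq_single i]
    · simp
    · intro b _ hb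
      simp [Pi.single_eq_of_ne hb]
    · simp
  -- the annihilator of range S is spanned by the trace
  have hann : Submodule.dualAnnihilator (LinearMap.range S) ≤
      Submodule.span K ({tracePairing K V 1} : Set (Module.Dual K (V →ₗ[K] V))) := by
    intro f hf
    obtain ⟨Z, rfl⟩ := tracePairing_surjective f
    rw [Submodule.mem_dualAnnihilator] at hf
    have hZu : ∀ (i : Fin (r + 1)) (Y : V →ₗ[K] V),
        LinearMap.trace K V (Z ∘ₗ (u i Y)) = 0 := by
      intro i Y
      exact hf _ (hrangeS i (LinearMap.mem_range_self (u i) Y))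
    have hZcomm : ∀ i : Fin (r + 1), ∀ v, Z (T i v) = T i (Z v) := by
      intro i
      have key : tracePairing K V
          (((T i).symm.toLinearMap ∘ₗ Z) ∘ₗ (T i).toLinearMap) = tracePairing K V Z := by
        ext Y
        have h0 := hZu i Y
        rw [hu_apply, LinearMap.comp_sub, map_sub, sub_eq_zero] at h0
        have hconjY : ((T i).conj Y : V →ₗ[K] V) =
            ((T i).toLinearMap ∘ₗ Y) ∘ₗ (T i).symm.toLinearMap := by
          rw [LinearEquiv.conj_apply]
        rw [hconjY] at h0
        rw [tracePairing_apply, tracePairing_apply]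
        have e1 : ((((T i).symm.toLinearMap ∘ₗ Z) ∘ₗ (T i).toLinearMap) ∘ₗ Y)
            = (T i).symm.toLinearMap ∘ₗ (Z ∘ₗ ((T i).toLinearMap ∘ₗ Y)) := rfl
        rw [e1, LinearMap.trace_comp_comm']
        have e2 : (Z ∘ₗ ((T i).toLinearMap ∘ₗ Y)) ∘ₗ (T i).symm.toLinearMap
            = Z ∘ₗ (((T i).toLinearMap ∘ₗ Y) ∘ₗ (T i).symm.toLinearMap) := rfl
        rw [e2, h0]
      have hZeq : ((T i).symm.toLinearMap ∘ₗ Z) ∘ₗ (T i).toLinearMap = Z :=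
        tracePairing_injective key
      intro v
      have h2 := congrFun (congrArg DFunLike.coe hZeq) v
      simp only [LinearMap.comp_apply, LinearEquiv.coe_coe] at h2
      rw [← h2, LinearEquiv.apply_symm_apply]
    obtain ⟨a, ha⟩ := schur_aux T hirr Z hZcomm
    rw [ha, map_smul]
    exact Submodule.smul_mem _ _ (Submodule.mem_span_singleton_self _)
  -- dimension bookkeeping
  have hranknull : ∀ i : Fin (r + 1),
      finrank K ↥(LinearMap.range (u i)) + finrank K ↥(LinearMap.ker (u i)) = n ^ 2 := by
    intro i
    rw [← hE]
    exact LinearMap.finrank_range_add_finrank_ker (u i)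
  have hPi : finrank K (Π i : Fin (r + 1), ↥(LinearMap.range (u i))) =
      ∑ i : Fin (r + 1), finrank K ↥(LinearMap.range (u i)) :=
    Module.finrank_pi_fintype K
  have hSrn : finrank K ↥(LinearMap.range S) + finrank K ↥(LinearMap.ker S) =
      ∑ i : Fin (r + 1), finrank K ↥(LinearMap.range (u i)) := by
    rw [← hPi]
    exact LinearMap.finrank_range_add_finrank_ker S
  have hΨrn : finrank K ↥(LinearMap.range Ψ) + finrank K ↥(LinearMap.ker Ψ) = n ^ 2 := by
    rw [← hE]
    exact LinearMap.finrank_range_add_finrank_ker Ψ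
  have hker1 : finrank K ↥(LinearMap.ker Ψ) ≤ 1 :=
    le_trans (Submodule.finrank_mono hkerΨ) (finrank_span_singleton_le _)
  have hrΨS : finrank K ↥(LinearMap.range Ψ) ≤ finrank K ↥(LinearMap.ker S) :=
    Submodule.finrank_mono hrangeΨ
  have hann1 : finrank K ↥(Submodule.dualAnnihilator (LinearMap.range S)) ≤ 1 :=
    le_trans (Submodule.finrank_mono hann) (finrank_span_singleton_le _)
  have hWann : finrank K ↥(LinearMap.range S) +
      finrank K ↥(Submodule.dualAnnihilator (LinearMap.range S)) = n ^ 2 := by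
    have h3 := Submodule.finrank_quotient_add_finrank (LinearMap.range S)
    have h4 : finrank K ((V →ₗ[K] V) ⧸ (LinearMap.range S)) =
        finrank K ↥(Submodule.dualAnnihilator (LinearMap.range S)) :=
      LinearEquiv.finrank_eq (Subspace.quotEquivAnnihilator (LinearMap.range S))
    rw [hE] at h3
    omega
  -- sum up
  have hcent : ∀ i : Fin (r + 1),
      finrank K ↥(centralizerSubmodule K (T i).toLinearMap) =
        finrank K ↥(LinearMap.ker (u i)) := fun i => by rw [hkerU i]
  have hsum : (∑ i : Fin (r + 1), finrank K ↥(LinearMap.ker (u i))) +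
      (∑ i : Fin (r + 1), finrank K ↥(LinearMap.range (u i))) = (r + 1) * n ^ 2 := by
    rw [← Finset.sum_add_distrib]
    rw [Finset.sum_congr rfl (fun i _ => by rw [add_comm, hranknull i])]
    simp [Finset.sum_const, mul_comm]
  have hrsum : (∑ i : Fin (r + 1), finrank K ↥(LinearMap.range (u i))) + 2 ≥ 2 * n ^ 2 := by
    omega
  have hfinal : (∑ i : Fin (r + 1), (finrank K ↥(LinearMap.ker (u i)) : ℤ))
      ≤ ((r : ℤ) - 1) * (n : ℤ) ^ 2 + 2 := by
    rw [← Nat.cast_sum]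
    have h5 : ((∑ i : Fin (r + 1), finrank K ↥(LinearMap.ker (u i)) : ℕ) : ℤ) +
        ((∑ i : Fin (r + 1), finrank K ↥(LinearMap.range (u i)) : ℕ) : ℤ)
        = ((r : ℤ) + 1) * (n : ℤ) ^ 2 := by
      exact_mod_cast congrArg (Nat.cast : ℕ → ℤ) hsum
    have h6 : ((∑ i : Fin (r + 1), finrank K ↥(LinearMap.range (u i)) : ℕ) : ℤ) + 2
        ≥ 2 * (n : ℤ) ^ 2 := by exact_mod_cast hrsum
    linarith
  calc (∑ i : Fin (r + 1),
        (finrank K ↥(centralizerSubmodule K (T i).toLinearMap) : ℤ))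
      = (∑ i : Fin (r + 1), (finrank K ↥(LinearMap.ker (u i)) : ℤ)) := by
        exact Finset.sum_congr rfl (fun i _ => by rw [hcent i])
    _ ≤ ((r : ℤ) - 1) * (n : ℤ) ^ 2 + 2 := hfinal
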